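/- Let R be a real symmetric 3×3 matrix with R ≠ 0 satisfying R² = (tr(R)/2)·R, and let ω be a nonzero vector with Rω = 0. Then R = (tr(R)/2)·(I − ω ωᵀ/‖ω‖²). -/

import Mathlib

lemma aux_symm_idem_tr0 (M : Matrix (Fin 3) (Fin 3) ℝ)
    (hs : M.IsSymm) (hi : M * M = M) (ht : M.trace = 0) : M = 0 := by
  have hdiag : ∀ i, M i i = ∑ k, (M i k) ^ 2 := by
    intro i
    conv_lhs => rw [← hi]
    rw [Matrix.mul_apply]
    refine Finset.sum_congr rfl fun k _ => ?_
    rw [hs.apply i k, sq]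
  have hnn : ∀ i ∈ Finset.univ, (0:ℝ) ≤ M i i := by
    intro i _
    rw [hdiag i]
    exact Finset.sum_nonneg fun k _ => sq_nonneg _
  have hsum : ∑ i, M i i = 0 := ht
  have hzero : ∀ i ∈ Finset.univ, M i i = 0 :=
    (Finset.sum_eq_zero_iff_of_nonneg hnn).mp hsum
  ext i j
  have h1 : ∑ k, (M i k) ^ 2 = 0 := by rw [← hdiag i]; exact hzero i (Finset.mem_univ i)
  have h2 : ∀ k ∈ Finset.univ, (M i k) ^ 2 = 0 :=
    (Finset.sum_eq_zero_iff_of_nonneg (fun k _ => sq_nonneg _)).mp h1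
  have := h2 j (Finset.mem_univ j)
  simpa using pow_eq_zero_iff (n := 2) (by norm_num) |>.mp this

theorem stmt_7 (R : Matrix (Fin 3) (Fin 3) ℝ) (hR : R.IsSymm) (hR0 : R ≠ 0)
    (h : R * R = (R.trace / 2) • R)
    (ω : Fin 3 → ℝ) (hω : ω ≠ 0) (hRω : R.mulVec ω = 0) :
    ∀ i j, R i j = (R.trace / 2) *
      ((if i = j then (1:ℝ) else 0) - ω i * ω j / (∑ k, ω k ^ 2)) := by
  -- positivity of the norm
  set n : ℝ := ∑ k, ω k ^ 2 with hn_def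
  obtain ⟨k0, hk0⟩ := Function.ne_iff.mp hω
  have hn : 0 < n := by
    refine Finset.sum_pos' (fun k _ => sq_nonneg _) ⟨k0, Finset.mem_univ _, ?_⟩
    have hk0' : ω k0 ≠ 0 := hk0
    positivity
  have hn0 : n ≠ 0 := ne_of_gt hn
  -- trace is nonzero
  have ht0 : R.trace ≠ 0 := by
    intro h0
    apply hR0
    have hRR : R * R = 0 := by rw [h, h0]; simp
    have hsq : ∑ i, ∑ j, (R i j) ^ 2 = 0 := by
      have : ∑ i, ∑ j, (R i j) ^ 2 = (R * R).trace := by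
        rw [Matrix.trace]
        refine Finset.sum_congr rfl fun i _ => ?_
        rw [Matrix.diag, Matrix.mul_apply]
        refine Finset.sum_congr rfl fun j _ => ?_
        rw [hR.apply i j, sq]
      rw [this, hRR, Matrix.trace_zero]
    ext i j
    have h1 : ∀ i' ∈ Finset.univ, ∑ j, (R i' j) ^ 2 = 0 :=
      (Finset.sum_eq_zero_iff_of_nonneg (fun i' _ =>
        Finset.sum_nonneg fun j' _ => sq_nonneg _)).mp hsq
    have h2 : ∀ j' ∈ Finset.univ, (R i j') ^ 2 = 0 :=
      (Finset.sum_eq_zero_iff_of_nonneg (fun j' _ => sq_nonneg _)).mp (h1 i (Finset.mem_univ i))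
    have := h2 j (Finset.mem_univ j)
    simpa using pow_eq_zero_iff (n := 2) (by norm_num) |>.mp this
  set c : ℝ := R.trace / 2 with hc_def
  have hc0 : c ≠ 0 := div_ne_zero ht0 two_ne_zero
  -- the rank one projection
  set Q : Matrix (Fin 3) (Fin 3) ℝ := Matrix.of (fun i j => ω i * ω j / n) with hQ_def
  have hQapp : ∀ i j, Q i j = ω i * ω j / n := fun i j => rfl
  have hQQ : Q * Q = Q := by
    ext i j
    rw [Matrix.mul_apply, hQapp]
    have : ∀ k, Q i k * Q k j = (ω i * ω j / n / n) * ω k ^ 2 := by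
      intro k; rw [hQapp, hQapp]; field_simp
    rw [Finset.sum_congr rfl fun k _ => this k, ← Finset.mul_sum, ← hn_def]
    field_simp
  have hRQ : R * Q = 0 := by
    ext i j
    rw [Matrix.mul_apply]
    have : ∀ k, R i k * Q k j = (R i k * ω k) * (ω j / n) := by
      intro k; rw [hQapp]; ring
    rw [Finset.sum_congr rfl fun k _ => this k, ← Finset.sum_mul]
    have hmv : ∑ k, R i k * ω k = 0 := by
      have := congrFun hRω i
      simpa [Matrix.mulVec, dotProduct] using this
    rw [hmv]; simp
  have hQR : Q * R = 0 := by
    ext i j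
    rw [Matrix.mul_apply]
    have : ∀ k, Q i k * R k j = (R j k * ω k) * (ω i / n) := by
      intro k; rw [hQapp, hR.apply j k]; ring
    rw [Finset.sum_congr rfl fun k _ => this k, ← Finset.sum_mul]
    have hmv : ∑ k, R j k * ω k = 0 := by
      have := congrFun hRω j
      simpa [Matrix.mulVec, dotProduct] using this
    rw [hmv]; simp
  have hQtr : Q.trace = 1 := by
    rw [Matrix.trace]
    have : ∀ i, Matrix.diag Q i = ω i ^ 2 / n := by
      intro i; rw [Matrix.diag, hQapp, sq]
    rw [Finset.sum_congr rfl fun i _ => this i, ← Finset.sum_div, ← hn_def]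
    field_simp
  have hQsymm : Q.IsSymm := by
    ext i j
    rw [Matrix.transpose_apply, hQapp, hQapp]; ring
  -- the matrix M
  set M : Matrix (Fin 3) (Fin 3) ℝ := 1 - c⁻¹ • R - Q with hM_def
  have hMM : M * M = M := by
    have hRR : R * R = c • R := h
    simp only [hM_def, sub_mul, mul_sub, one_mul, mul_one, Matrix.smul_mul,
      Matrix.mul_smul, hRR, hRQ, hQR, hQQ, smul_smul, smul_zero, sub_zero, zero_sub]
    rw [show c⁻¹ * (c⁻¹ * c) = c⁻¹ by field_simp]
    abel
  have hMtr : M.trace = 0 := by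
    rw [hM_def, Matrix.trace_sub, Matrix.trace_sub, Matrix.trace_smul, Matrix.trace_one, hQtr]
    have : c⁻¹ • R.trace = 2 := by
      rw [smul_eq_mul, hc_def]
      field_simp
    rw [this]
    norm_num
  have hMsymm : M.IsSymm := by
    rw [Matrix.IsSymm, hM_def, Matrix.transpose_sub, Matrix.transpose_sub,
      Matrix.transpose_smul, Matrix.transpose_one, hR.eq, hQsymm.eq]
  have hM0 : M = 0 := aux_symm_idem_tr0 M hMsymm hMM hMtr
  intro i j
  have := congrFun (congrFun hM0 i) j
  rw [hM_def] at this
  simp only [Matrix.sub_apply, Matrix.smul_apply, Matrix.one_apply, hQapp,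
    Matrix.zero_apply, smul_eq_mul] at this
  have h2 : c⁻¹ * R i j = (if i = j then (1:ℝ) else 0) - ω i * ω j / n := by linarith
  calc R i j = c * (c⁻¹ * R i j) := by field_simp
    _ = _ := by rw [h2]
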